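/- Pfaffian of a block matrix with rank-one off-diagonal block (even case): let A and B be skew-symmetric real k×k matrices with k even, let U, V be column vectors of size k, and set D = U V^T. Then the Pfaffian of the 2k×2k block matrix [[A, D], [-D^T, B]] equals pf(A)·pf(B). -/

import Mathlib

open Matrix Equiv Finset

/-- The Pfaffian of an `n × n` real matrix (intended for skew-symmetric matrices with
`n` even). -/
noncomputable def pf {n : ℕ} (A : Matrix (Fin n) (Fin n) ℝ) : ℝ :=
  (1 / ((2 : ℝ) ^ (n / 2) * (Nat.factorial (n / 2) : ℝ))) *
    ∑ σ : Equiv.Perm (Fin n), ((Equiv.Perm.sign σ : ℤ) : ℝ) *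
      ∏ i : Fin (n / 2),
        A (σ ⟨2 * (i : ℕ), by have := i.isLt; omega⟩)
          (σ ⟨2 * (i : ℕ) + 1, by have := i.isLt; omega⟩)

/-- The `2k × 2k` block matrix `[[A, B], [C, D]]` built from `k × k` blocks, with rows
and columns ordered `1, …, k, k+1, …, 2k`. -/
noncomputable def blockMat {k : ℕ} (A B C D : Matrix (Fin k) (Fin k) ℝ) :
    Matrix (Fin (2 * k)) (Fin (2 * k)) ℝ :=
  (Matrix.fromBlocks A B C D).submatrix
    (finSumFinEquiv.trans (finCongr (two_mul k).symm)).symm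
    (finSumFinEquiv.trans (finCongr (two_mul k).symm)).symm

namespace PfAux

def pos {k : ℕ} (i : Fin k) (b : Fin 2) : Fin (2 * k) :=
  ⟨2 * i.val + b.val, by have := i.isLt; have := b.isLt; omega⟩

@[simp] lemma pos_val {k : ℕ} (i : Fin k) (b : Fin 2) : (pos i b).val = 2 * i.val + b.val := rfl

def posE (k : ℕ) : Fin 2 × Fin k ≃ Fin (2 * k) where
  toFun p := pos p.2 p.1
  invFun x := (⟨x.val % 2, by omega⟩, ⟨x.val / 2, by have := x.isLt; omega⟩)
  left_inv := by
    rintro ⟨b, i⟩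
    have hb := b.isLt; have hi := i.isLt
    ext <;> simp [pos] <;> omega
  right_inv := by
    intro x
    have := x.isLt
    ext
    simp [pos]
    omega

lemma pos_surj {k : ℕ} (x : Fin (2 * k)) :
    x = pos (⟨x.val / 2, by have := x.isLt; omega⟩ : Fin k) ⟨x.val % 2, by omega⟩ := by
  ext; simp [pos]; omega

lemma pos_inj {k : ℕ} {i j : Fin k} {a b : Fin 2} (h : pos i a = pos j b) : i = j ∧ a = b := by
  have := congrArg Fin.val h
  have ha := a.isLt; have hb := b.isLt
  simp only [pos_val] at this
  constructor <;> ext <;> omega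

lemma pf_even (k : ℕ) (M : Matrix (Fin (2 * k)) (Fin (2 * k)) ℝ) :
    pf M = (1 / ((2 : ℝ) ^ k * (Nat.factorial k : ℝ))) *
      ∑ σ : Equiv.Perm (Fin (2 * k)), ((Equiv.Perm.sign σ : ℤ) : ℝ) *
        ∏ i : Fin k, M (σ (pos i 0)) (σ (pos i 1)) := by
  have h : 2 * k / 2 = k := by omega
  unfold pf
  congr 1
  · rw [h]
  refine Finset.sum_congr rfl fun σ _ => ?_
  congr 1
  refine Fintype.prod_equiv (finCongr h) _ _ fun i => ?_
  congr 1


def EQ (k : ℕ) : (Fin k ⊕ Fin k) ≃ Fin (2 * k) :=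
  finSumFinEquiv.trans (finCongr (two_mul k).symm)

@[simp] lemma EQ_inl (k : ℕ) (a : Fin k) : ((EQ k) (Sum.inl a)).val = a.val := rfl

@[simp] lemma EQ_inr (k : ℕ) (a : Fin k) : ((EQ k) (Sum.inr a)).val = k + a.val := rfl

lemma EQ_symm_lt {k : ℕ} (x : Fin (2 * k)) (h : x.val < k) :
    (EQ k).symm x = Sum.inl ⟨x.val, h⟩ := by
  rw [Equiv.symm_apply_eq]; exact Fin.ext rfl

lemma EQ_symm_ge {k : ℕ} (x : Fin (2 * k)) (h : ¬ x.val < k) :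
    (EQ k).symm x = Sum.inr ⟨x.val - k, by have := x.isLt; omega⟩ := by
  rw [Equiv.symm_apply_eq]; exact Fin.ext (by simp; omega)

lemma blockMat_apply {k : ℕ} (A B C D : Matrix (Fin k) (Fin k) ℝ) (x y : Fin (2 * k)) :
    blockMat A B C D x y = Matrix.fromBlocks A B C D ((EQ k).symm x) ((EQ k).symm y) := rfl

lemma blockMat_ll {k : ℕ} (A B C D : Matrix (Fin k) (Fin k) ℝ) {x y : Fin (2 * k)}
    (h1 : x.val < k) (h2 : y.val < k) :
    blockMat A B C D x y = A ⟨x.val, h1⟩ ⟨y.val, h2⟩ := by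
  rw [blockMat_apply, EQ_symm_lt x h1, EQ_symm_lt y h2]; rfl

lemma blockMat_lr {k : ℕ} (A B C D : Matrix (Fin k) (Fin k) ℝ) {x y : Fin (2 * k)}
    (h1 : x.val < k) (h2 : ¬ y.val < k) :
    blockMat A B C D x y = B ⟨x.val, h1⟩ ⟨y.val - k, by have := y.isLt; omega⟩ := by
  rw [blockMat_apply, EQ_symm_lt x h1, EQ_symm_ge y h2]; rfl

lemma blockMat_rl {k : ℕ} (A B C D : Matrix (Fin k) (Fin k) ℝ) {x y : Fin (2 * k)}
    (h1 : ¬ x.val < k) (h2 : y.val < k) :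
    blockMat A B C D x y = C ⟨x.val - k, by have := x.isLt; omega⟩ ⟨y.val, h2⟩ := by
  rw [blockMat_apply, EQ_symm_ge x h1, EQ_symm_lt y h2]; rfl

lemma blockMat_rr {k : ℕ} (A B C D : Matrix (Fin k) (Fin k) ℝ) {x y : Fin (2 * k)}
    (h1 : ¬ x.val < k) (h2 : ¬ y.val < k) :
    blockMat A B C D x y = D ⟨x.val - k, by have := x.isLt; omega⟩ ⟨y.val - k, by have := y.isLt; omega⟩ := by
  rw [blockMat_apply, EQ_symm_ge x h1, EQ_symm_ge y h2]; rfl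


lemma sum_pos_decomp {k : ℕ} (f : Fin (2 * k) → ℕ) :
    ∑ i : Fin k, (f (pos i 0) + f (pos i 1)) = ∑ x, f x := by
  rw [← Equiv.sum_comp (posE k) f, Fintype.sum_prod_type, Fin.sum_univ_two,
    ← Finset.sum_add_distrib]
  rfl

lemma card_left (k : ℕ) : ∑ y : Fin (2 * k), (if y.val < k then 1 else 0) = k := by
  have h : (univ.filter (fun y : Fin (2 * k) => y.val < k))
      = univ.map (Fin.castLEEmb (by omega : k ≤ 2 * k)) := by
    ext y
    simp only [mem_filter, mem_univ, true_and, Finset.mem_map, Fin.castLEEmb]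
    constructor
    · intro h; exact ⟨⟨y.val, h⟩, rfl⟩
    · rintro ⟨a, rfl⟩; simpa using a.isLt
  rw [Finset.sum_boole (fun y : Fin (2 * k) => y.val < k) univ, h,
    Finset.card_map, Finset.card_univ, Fintype.card_fin, Nat.cast_id]

section Main

variable {m : ℕ}

def side {m : ℕ} (x : Fin (2 * (2 * m))) : Prop := x.val < 2 * m

instance (x : Fin (2 * (2 * m))) : Decidable (side x) := Nat.decLt _ _

def noCross (σ : Perm (Fin (2 * (2 * m)))) : Prop :=
  ∀ i : Fin (2 * m), (side (σ (pos i 0)) ↔ side (σ (pos i 1)))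

instance (σ : Perm (Fin (2 * (2 * m)))) : Decidable (noCross σ) := by
  unfold noCross; infer_instance

def crossSlot (σ : Perm (Fin (2 * (2 * m)))) (i : Fin (2 * m)) : Prop :=
  ¬ (side (σ (pos i 0)) ↔ side (σ (pos i 1)))

instance (σ : Perm (Fin (2 * (2 * m)))) (i : Fin (2 * m)) : Decidable (crossSlot σ i) := by
  unfold crossSlot; infer_instance

lemma key_count (σ : Perm (Fin (2 * (2 * m)))) :
    ∑ i : Fin (2 * m),
      ((if side (σ (pos i 0)) then 1 else 0) + (if side (σ (pos i 1)) then 1 else 0)) = 2 * m := by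
  rw [sum_pos_decomp (fun x => if side (σ x) then 1 else 0)]
  rw [Equiv.sum_comp σ (fun x => if side x then 1 else 0)]
  exact card_left (2 * m)

lemma parity_cross (σ : Perm (Fin (2 * (2 * m)))) :
    Even (univ.filter (fun i => crossSlot σ i)).card := by
  have key := key_count σ
  have point : ∀ i : Fin (2 * m),
      (if side (σ (pos i 0)) then 1 else 0) + (if side (σ (pos i 1)) then 1 else 0)
      = (if crossSlot σ i then 1 else 0)
        + 2 * (if (side (σ (pos i 0)) ∧ side (σ (pos i 1))) then 1 else 0) := by
    intro i
    by_cases h0 : side (σ (pos i 0)) <;> by_cases h1 : side (σ (pos i 1)) <;>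
      simp [crossSlot, h0, h1]
  rw [Finset.sum_congr rfl (fun i _ => point i), Finset.sum_add_distrib,
    ← Finset.mul_sum] at key
  rw [Finset.card_filter]
  exact ⟨m - ∑ i : Fin (2*m), (if (side (σ (pos i 0)) ∧ side (σ (pos i 1))) then 1 else 0),
    by omega⟩

lemma card_left_slots (σ : Perm (Fin (2 * (2 * m)))) (h : noCross σ) :
    (univ.filter (fun i => side (σ (pos i 0)))).card = m := by
  have key := key_count σ
  have point : ∀ i : Fin (2 * m),
      (if side (σ (pos i 0)) then 1 else 0) + (if side (σ (pos i 1)) then 1 else 0)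
      = 2 * (if side (σ (pos i 0)) then 1 else 0) := by
    intro i
    by_cases h0 : side (σ (pos i 0))
    · simp [h0, ((h i).mp h0)]
    · have h1 : ¬ side (σ (pos i 1)) := fun h1 => h0 ((h i).mpr h1)
      simp [h0, h1]
  rw [Finset.sum_congr rfl (fun i _ => point i), ← Finset.mul_sum] at key
  rw [Finset.card_filter]
  omega


variable (A B : Matrix (Fin (2 * m)) (Fin (2 * m)) ℝ) (U V : Fin (2 * m) → ℝ)

noncomputable def Mm (A B : Matrix (Fin (2 * m)) (Fin (2 * m)) ℝ) (U V : Fin (2 * m) → ℝ) :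
    Matrix (Fin (2 * (2 * m))) (Fin (2 * (2 * m))) ℝ :=
  blockMat A (Matrix.of fun i j => U i * V j) (-(Matrix.of fun i j => U i * V j)ᵀ) B

noncomputable def fT (A B : Matrix (Fin (2 * m)) (Fin (2 * m)) ℝ) (U V : Fin (2 * m) → ℝ)
    (σ : Perm (Fin (2 * (2 * m)))) : ℝ :=
  ((Equiv.Perm.sign σ : ℤ) : ℝ) * ∏ i : Fin (2 * m), Mm A B U V (σ (pos i 0)) (σ (pos i 1))

def Uv (U : Fin (2 * m) → ℝ) (x : Fin (2 * (2 * m))) : ℝ :=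
  if h : side x then U ⟨x.val, h⟩ else 0

def Vv (V : Fin (2 * m) → ℝ) (x : Fin (2 * (2 * m))) : ℝ :=
  V ⟨x.val - 2 * m, by have := x.isLt; omega⟩

def lp (σ : Perm (Fin (2 * (2 * m)))) (i : Fin (2 * m)) : Fin (2 * (2 * m)) :=
  pos i (if side (σ (pos i 0)) then 0 else 1)

def rp (σ : Perm (Fin (2 * (2 * m)))) (i : Fin (2 * m)) : Fin (2 * (2 * m)) :=
  pos i (if side (σ (pos i 0)) then 1 else 0)

lemma lp_ne_rp (σ : Perm (Fin (2 * (2 * m)))) (i j : Fin (2 * m)) : lp σ i ≠ rp σ j := by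
  intro hEq
  obtain ⟨h1, h2⟩ := pos_inj hEq
  subst h1
  by_cases h0 : side (σ (pos i 0))
  · rw [if_pos h0, if_pos h0] at h2; exact (by decide : ((0:Fin 2) = 1) → False) h2
  · rw [if_neg h0, if_neg h0] at h2; exact (by decide : ((1:Fin 2) = 0) → False) h2

lemma rp_ne_rp (σ τ : Perm (Fin (2 * (2 * m)))) {i j : Fin (2 * m)} (hij : i ≠ j) :
    rp σ i ≠ rp τ j := fun hEq => hij (pos_inj hEq).1

lemma side_lp (σ : Perm (Fin (2 * (2 * m)))) (i : Fin (2 * m)) (hc : crossSlot σ i) :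
    side (σ (lp σ i)) := by
  unfold crossSlot at hc
  by_cases h0 : side (σ (pos i 0)) <;> simp only [lp, h0, if_true, if_false] <;> tauto

lemma not_side_rp (σ : Perm (Fin (2 * (2 * m)))) (i : Fin (2 * m)) (hc : crossSlot σ i) :
    ¬ side (σ (rp σ i)) := by
  unfold crossSlot at hc
  by_cases h0 : side (σ (pos i 0)) <;> simp only [rp, h0, if_true, if_false] <;> tauto

lemma factor_cross (σ : Perm (Fin (2 * (2 * m)))) (i : Fin (2 * m)) (hc : crossSlot σ i) :
    Mm A B U V (σ (pos i 0)) (σ (pos i 1))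
      = (if side (σ (pos i 0)) then (1:ℝ) else -1) * (Uv U (σ (lp σ i)) * Vv V (σ (rp σ i))) := by
  unfold crossSlot at hc
  by_cases h0 : side (σ (pos i 0))
  · have h1 : ¬ side (σ (pos i 1)) := by tauto
    rw [Mm, blockMat_lr _ _ _ _ h0 h1]
    simp only [lp, rp, h0, if_true, if_pos]
    rw [Uv, dif_pos h0, Vv]
    simp [Matrix.of_apply]
  · have h1 : side (σ (pos i 1)) := by tauto
    rw [Mm, blockMat_rl _ _ _ _ h0 h1]
    simp only [lp, rp, h0, if_false, if_neg]
    rw [Uv, dif_pos h1, Vv]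
    simp [Matrix.of_apply]

def csF (σ : Perm (Fin (2 * (2 * m)))) : Finset (Fin (2 * m)) :=
  univ.filter (fun i => crossSlot σ i)

lemma csF_nonempty (σ : Perm (Fin (2 * (2 * m)))) (h : ¬ noCross σ) : (csF σ).Nonempty := by
  rcases not_forall.mp h with ⟨i, hi⟩
  exact ⟨i, by simp only [csF, mem_filter, mem_univ, true_and]; exact hi⟩

lemma csF_card_two (σ : Perm (Fin (2 * (2 * m)))) (h : ¬ noCross σ) : 1 < (csF σ).card := by
  have hne := csF_nonempty σ h
  have h0 : 0 < (csF σ).card := Finset.card_pos.mpr hne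
  rcases parity_cross σ with ⟨t, ht⟩
  have : (csF σ).card = t + t := ht
  omega

def i1 (σ : Perm (Fin (2 * (2 * m)))) (h : ¬ noCross σ) : Fin (2 * m) :=
  (csF σ).min' (csF_nonempty σ h)

def i2 (σ : Perm (Fin (2 * (2 * m)))) (h : ¬ noCross σ) : Fin (2 * m) :=
  ((csF σ).erase (i1 σ h)).min' (by
    have h1 : i1 σ h ∈ csF σ := Finset.min'_mem _ _
    rw [← Finset.card_pos, Finset.card_erase_of_mem h1]
    have := csF_card_two σ h; omega)

lemma i1_mem (σ : Perm (Fin (2 * (2 * m)))) (h : ¬ noCross σ) : i1 σ h ∈ csF σ :=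
  Finset.min'_mem _ _

lemma i2_mem' (σ : Perm (Fin (2 * (2 * m)))) (h : ¬ noCross σ) :
    i2 σ h ∈ (csF σ).erase (i1 σ h) := Finset.min'_mem _ _

lemma i2_mem (σ : Perm (Fin (2 * (2 * m)))) (h : ¬ noCross σ) : i2 σ h ∈ csF σ :=
  (Finset.mem_erase.mp (i2_mem' σ h)).2

lemma i1_ne_i2 (σ : Perm (Fin (2 * (2 * m)))) (h : ¬ noCross σ) : i1 σ h ≠ i2 σ h := fun hEq =>
  (Finset.mem_erase.mp (i2_mem' σ h)).1 hEq.symm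

lemma i1_cross (σ : Perm (Fin (2 * (2 * m)))) (h : ¬ noCross σ) : crossSlot σ (i1 σ h) := by
  have := i1_mem σ h; simpa [csF] using this

lemma i2_cross (σ : Perm (Fin (2 * (2 * m)))) (h : ¬ noCross σ) : crossSlot σ (i2 σ h) := by
  have := i2_mem σ h; simpa [csF] using this

def gI (σ : Perm (Fin (2 * (2 * m)))) (h : ¬ noCross σ) : Perm (Fin (2 * (2 * m))) :=
  σ * Equiv.swap (rp σ (i1 σ h)) (rp σ (i2 σ h))

lemma gI_apply (σ : Perm (Fin (2 * (2 * m)))) (h : ¬ noCross σ) (x) :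
    gI σ h x = σ (Equiv.swap (rp σ (i1 σ h)) (rp σ (i2 σ h)) x) := rfl

lemma side_gI (σ : Perm (Fin (2 * (2 * m)))) (h : ¬ noCross σ) (x) :
    side (gI σ h x) ↔ side (σ x) := by
  have hp1 := not_side_rp σ _ (i1_cross σ h)
  have hp2 := not_side_rp σ _ (i2_cross σ h)
  rw [gI_apply]
  by_cases hx1 : x = rp σ (i1 σ h)
  · subst hx1; rw [Equiv.swap_apply_left]; tauto
  by_cases hx2 : x = rp σ (i2 σ h)
  · subst hx2; rw [Equiv.swap_apply_right]; tauto
  · rw [Equiv.swap_apply_of_ne_of_ne hx1 hx2]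

lemma crossSlot_gI (σ : Perm (Fin (2 * (2 * m)))) (h : ¬ noCross σ) (i) :
    crossSlot (gI σ h) i ↔ crossSlot σ i := by
  unfold crossSlot
  rw [side_gI σ h, side_gI σ h]

lemma noCross_gI (σ : Perm (Fin (2 * (2 * m)))) (h : ¬ noCross σ) : ¬ noCross (gI σ h) := by
  intro hnc
  exact h (fun i => by have := hnc i; rw [side_gI σ h, side_gI σ h] at this; exact this)

lemma csF_gI (σ : Perm (Fin (2 * (2 * m)))) (h : ¬ noCross σ) : csF (gI σ h) = csF σ := by
  ext i
  simp only [csF, mem_filter, mem_univ, true_and, crossSlot_gI σ h]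

lemma rp_gI (σ : Perm (Fin (2 * (2 * m)))) (h : ¬ noCross σ) (i) : rp (gI σ h) i = rp σ i := by
  unfold rp
  congr 1
  exact if_congr (side_gI σ h _) rfl rfl

lemma lp_gI (σ : Perm (Fin (2 * (2 * m)))) (h : ¬ noCross σ) (i) : lp (gI σ h) i = lp σ i := by
  unfold lp
  congr 1
  exact if_congr (side_gI σ h _) rfl rfl

lemma i1_gI (σ : Perm (Fin (2 * (2 * m)))) (h : ¬ noCross σ) :
    i1 (gI σ h) (noCross_gI σ h) = i1 σ h := by
  unfold i1
  simp only [csF_gI σ h]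

lemma i2_gI (σ : Perm (Fin (2 * (2 * m)))) (h : ¬ noCross σ) :
    i2 (gI σ h) (noCross_gI σ h) = i2 σ h := by
  unfold i2
  simp only [csF_gI σ h, i1_gI σ h]

lemma gI_gI (σ : Perm (Fin (2 * (2 * m)))) (h : ¬ noCross σ) :
    gI (gI σ h) (noCross_gI σ h) = σ := by
  conv_lhs => rw [gI]
  rw [i1_gI σ h, i2_gI σ h, rp_gI σ h, rp_gI σ h, gI, mul_assoc, Equiv.swap_mul_self, mul_one]

lemma gI_ne (σ : Perm (Fin (2 * (2 * m)))) (h : ¬ noCross σ) : gI σ h ≠ σ := by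
  intro hEq
  have := congrArg (fun τ : Perm (Fin (2*(2*m))) => τ (rp σ (i1 σ h))) hEq
  simp only [gI_apply, Equiv.swap_apply_left] at this
  exact rp_ne_rp σ σ (Ne.symm (i1_ne_i2 σ h)) (σ.injective this)




lemma pos_ne_rp (σ : Perm (Fin (2 * (2 * m)))) {i j : Fin (2 * m)} (b : Fin 2)
    (hij : i ≠ j) : pos i b ≠ rp σ j := by
  intro hEq
  unfold rp at hEq
  exact hij (pos_inj hEq).1

lemma prod_two_swap {N : ℕ} (F G : Fin N → ℝ) (j1 j2 : Fin N) (h12 : j1 ≠ j2)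
    (hother : ∀ i, i ≠ j1 → i ≠ j2 → F i = G i) (hpair : F j1 * F j2 = G j1 * G j2) :
    ∏ i, F i = ∏ i, G i := by
  have m2 : j2 ∈ univ.erase j1 := Finset.mem_erase.mpr ⟨Ne.symm h12, mem_univ _⟩
  rw [← Finset.mul_prod_erase univ F (mem_univ j1), ← Finset.mul_prod_erase _ F m2,
    ← Finset.mul_prod_erase univ G (mem_univ j1), ← Finset.mul_prod_erase _ G m2,
    ← mul_assoc, ← mul_assoc, hpair]
  congr 1
  refine Finset.prod_congr rfl fun i hi => ?_
  rw [Finset.mem_erase, Finset.mem_erase] at hi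
  exact hother i hi.2.1 hi.1

lemma fT_gI (σ : Perm (Fin (2 * (2 * m)))) (h : ¬ noCross σ) :
    fT A B U V (gI σ h) = - fT A B U V σ := by
  have hne12 := i1_ne_i2 σ h
  have hnep : rp σ (i1 σ h) ≠ rp σ (i2 σ h) := rp_ne_rp σ σ hne12
  have hsign : Equiv.Perm.sign (gI σ h) = - Equiv.Perm.sign σ := by
    rw [gI, Equiv.Perm.sign_mul, Equiv.Perm.sign_swap hnep, mul_neg_one]
  have hprod : (∏ i : Fin (2 * m), Mm A B U V (gI σ h (pos i 0)) (gI σ h (pos i 1)))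
      = ∏ i : Fin (2 * m), Mm A B U V (σ (pos i 0)) (σ (pos i 1)) := by
    refine prod_two_swap _ _ (i1 σ h) (i2 σ h) hne12 ?_ ?_
    · intro i hi1 hi2
      have e0 : gI σ h (pos i 0) = σ (pos i 0) := by
        rw [gI_apply, Equiv.swap_apply_of_ne_of_ne (pos_ne_rp σ _ hi1) (pos_ne_rp σ _ hi2)]
      have e1 : gI σ h (pos i 1) = σ (pos i 1) := by
        rw [gI_apply, Equiv.swap_apply_of_ne_of_ne (pos_ne_rp σ _ hi1) (pos_ne_rp σ _ hi2)]
      rw [e0, e1]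
    · have hc1 := i1_cross σ h
      have hc2 := i2_cross σ h
      have hc1' : crossSlot (gI σ h) (i1 σ h) := (crossSlot_gI σ h _).mpr hc1
      have hc2' : crossSlot (gI σ h) (i2 σ h) := (crossSlot_gI σ h _).mpr hc2
      rw [factor_cross A B U V (gI σ h) _ hc1', factor_cross A B U V (gI σ h) _ hc2',
        factor_cross A B U V σ _ hc1, factor_cross A B U V σ _ hc2]
      rw [lp_gI σ h, lp_gI σ h, rp_gI σ h, rp_gI σ h]
      have el1 : gI σ h (lp σ (i1 σ h)) = σ (lp σ (i1 σ h)) := by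
        rw [gI_apply, Equiv.swap_apply_of_ne_of_ne (lp_ne_rp σ _ _) (lp_ne_rp σ _ _)]
      have el2 : gI σ h (lp σ (i2 σ h)) = σ (lp σ (i2 σ h)) := by
        rw [gI_apply, Equiv.swap_apply_of_ne_of_ne (lp_ne_rp σ _ _) (lp_ne_rp σ _ _)]
      have er1 : gI σ h (rp σ (i1 σ h)) = σ (rp σ (i2 σ h)) := by
        rw [gI_apply, Equiv.swap_apply_left]
      have er2 : gI σ h (rp σ (i2 σ h)) = σ (rp σ (i1 σ h)) := by
        rw [gI_apply, Equiv.swap_apply_right]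
      have es1 : (if side (gI σ h (pos (i1 σ h) 0)) then (1:ℝ) else -1)
          = (if side (σ (pos (i1 σ h) 0)) then (1:ℝ) else -1) :=
        if_congr (side_gI σ h _) rfl rfl
      have es2 : (if side (gI σ h (pos (i2 σ h) 0)) then (1:ℝ) else -1)
          = (if side (σ (pos (i2 σ h) 0)) then (1:ℝ) else -1) :=
        if_congr (side_gI σ h _) rfl rfl
      rw [el1, el2, er1, er2, es1, es2]
      ring
  unfold fT
  rw [hsign, hprod]
  push_cast
  ring

lemma sum_cross_zero :
    ∑ σ ∈ univ.filter (fun σ : Perm (Fin (2 * (2 * m))) => ¬ noCross σ), fT A B U V σ = 0 := by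
  refine Finset.sum_involution
    (fun σ hσ => gI σ (by simpa using (Finset.mem_filter.mp hσ).2)) ?_ ?_ ?_ ?_
  · intro σ hσ
    rw [fT_gI]
    ring
  · intro σ hσ _
    exact gI_ne σ _
  · intro σ hσ
    simp only [Finset.mem_filter, Finset.mem_univ, true_and]
    exact noCross_gI σ _
  · intro σ hσ
    exact gI_gI σ _


lemma side_EQ_inl (x : Fin (2 * m)) : side (EQ (2 * m) (Sum.inl x)) := by
  simpa [side] using x.isLt

lemma not_side_EQ_inr (x : Fin (2 * m)) : ¬ side (EQ (2 * m) (Sum.inr x)) := by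
  simp [side]

lemma compl_card (S : Finset (Fin (2 * m))) (hS : S.card = m) : Sᶜ.card = m := by
  have h := Finset.card_compl S
  rw [Fintype.card_fin] at h
  omega

def rho (S : Finset (Fin (2 * m))) (hS : S.card = m) : Perm (Fin (2 * m)) :=
  (EQ m).symm.trans
    ((Equiv.sumCongr (S.orderIsoOfFin hS).toEquiv
        ((Sᶜ).orderIsoOfFin (compl_card S hS)).toEquiv).trans
      ((Equiv.sumCongr (Equiv.refl _)
          (Equiv.subtypeEquivRight (fun x => Finset.mem_compl))).trans
        (Equiv.sumCompl (· ∈ S))))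

lemma rho_mem_iff (S : Finset (Fin (2 * m))) (hS : S.card = m) (i : Fin (2 * m)) :
    rho S hS i ∈ S ↔ i.val < m := by
  by_cases h : i.val < m
  · simp only [rho, Equiv.trans_apply, EQ_symm_lt i h, Equiv.sumCongr_apply, Sum.map_inl,
      Equiv.sumCompl_apply_inl]
    simpa [h] using (S.orderIsoOfFin hS ⟨i.val, h⟩).2
  · simp only [rho, Equiv.trans_apply, EQ_symm_ge i h, Equiv.sumCongr_apply, Sum.map_inr,
      Equiv.sumCompl_apply_inr]
    have hmem := ((Sᶜ).orderIsoOfFin (compl_card S hS) ⟨i.val - m, by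
        have := i.isLt; omega⟩).2
    rw [Finset.mem_compl] at hmem
    simpa [h] using hmem

def wS (S : Finset (Fin (2 * m))) (hS : S.card = m) : Perm (Fin (2 * (2 * m))) :=
  (posE (2 * m)).permCongr (Equiv.prodCongrRight (fun _ : Fin 2 => rho S hS))

lemma wS_apply (S : Finset (Fin (2 * m))) (hS : S.card = m) (i : Fin (2 * m)) (b : Fin 2) :
    wS S hS (pos i b) = pos (rho S hS i) b := by
  have h : (pos i b : Fin (2 * (2 * m))) = posE (2 * m) (b, i) := rfl
  rw [h, wS, Equiv.permCongr_apply, Equiv.symm_apply_apply]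
  rfl

lemma sign_wS (S : Finset (Fin (2 * m))) (hS : S.card = m) :
    Equiv.Perm.sign (wS S hS) = 1 := by
  rw [wS, Equiv.Perm.sign_permCongr, Equiv.Perm.sign_prodCongrRight, Fin.prod_univ_two]
  exact Int.units_mul_self _

lemma wS_inv_apply (S : Finset (Fin (2 * m))) (hS : S.card = m) (j : Fin (2 * m)) (b : Fin 2) :
    (wS S hS)⁻¹ (pos j b) = pos ((rho S hS)⁻¹ j) b := by
  apply (wS S hS).injective
  rw [Equiv.Perm.inv_def, Equiv.apply_symm_apply, wS_apply, Equiv.Perm.inv_def, Equiv.apply_symm_apply]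

def sig0 (α β : Perm (Fin (2 * m))) : Perm (Fin (2 * (2 * m))) :=
  (EQ (2 * m)).permCongr (Equiv.sumCongr α β)

lemma sig0_inl (α β : Perm (Fin (2 * m))) (x : Fin (2 * m)) :
    sig0 α β (EQ (2 * m) (Sum.inl x)) = EQ (2 * m) (Sum.inl (α x)) := by
  simp [sig0, Equiv.permCongr_apply]

lemma sig0_inr (α β : Perm (Fin (2 * m))) (x : Fin (2 * m)) :
    sig0 α β (EQ (2 * m) (Sum.inr x)) = EQ (2 * m) (Sum.inr (β x)) := by
  simp [sig0, Equiv.permCongr_apply]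

lemma pos_decomp_lt (i : Fin (2 * m)) (b : Fin 2) (h : i.val < m) :
    (pos i b : Fin (2 * (2 * m))) = EQ (2 * m) (Sum.inl (pos (⟨i.val, h⟩ : Fin m) b)) := by
  apply Fin.ext; simp [pos]

lemma pos_decomp_ge (i : Fin (2 * m)) (b : Fin 2) (h : ¬ i.val < m) :
    (pos i b : Fin (2 * (2 * m)))
      = EQ (2 * m) (Sum.inr (pos (⟨i.val - m, by have := i.isLt; omega⟩ : Fin m) b)) := by
  apply Fin.ext; simp [pos]; try omega

lemma sig0_pos_lt (α β : Perm (Fin (2 * m))) (i : Fin (2 * m)) (b : Fin 2) (h : i.val < m) :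
    sig0 α β (pos i b) = EQ (2 * m) (Sum.inl (α (pos (⟨i.val, h⟩ : Fin m) b))) := by
  rw [pos_decomp_lt i b h, sig0_inl]

lemma sig0_pos_ge (α β : Perm (Fin (2 * m))) (i : Fin (2 * m)) (b : Fin 2) (h : ¬ i.val < m) :
    sig0 α β (pos i b)
      = EQ (2 * m) (Sum.inr (β (pos (⟨i.val - m, by have := i.isLt; omega⟩ : Fin m) b))) := by
  rw [pos_decomp_ge i b h, sig0_inr]

def Psi (S : Finset (Fin (2 * m))) (hS : S.card = m) (α β : Perm (Fin (2 * m))) :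
    Perm (Fin (2 * (2 * m))) :=
  sig0 α β * (wS S hS)⁻¹

lemma Psi_apply (S : Finset (Fin (2 * m))) (hS : S.card = m) (α β : Perm (Fin (2 * m)))
    (j : Fin (2 * m)) (b : Fin 2) :
    Psi S hS α β (pos j b) = sig0 α β (pos ((rho S hS)⁻¹ j) b) := by
  rw [Psi, Equiv.Perm.mul_apply, wS_inv_apply]

lemma side_Psi (S : Finset (Fin (2 * m))) (hS : S.card = m) (α β : Perm (Fin (2 * m)))
    (j : Fin (2 * m)) (b : Fin 2) :
    side (Psi S hS α β (pos j b)) ↔ j ∈ S := by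
  have hmem : ((rho S hS)⁻¹ j).val < m ↔ j ∈ S := by
    rw [← rho_mem_iff S hS ((rho S hS)⁻¹ j), Equiv.Perm.inv_def, Equiv.apply_symm_apply]
  rw [Psi_apply]
  by_cases h : ((rho S hS)⁻¹ j).val < m
  · rw [sig0_pos_lt α β _ b h]
    simp only [side_EQ_inl, true_iff]
    exact hmem.mp h
  · rw [sig0_pos_ge α β _ b h]
    simp only [not_side_EQ_inr, false_iff]
    exact fun hj => h (hmem.mpr hj)

lemma Mm_inl_inl (x y : Fin (2 * m)) :
    Mm A B U V (EQ (2 * m) (Sum.inl x)) (EQ (2 * m) (Sum.inl y)) = A x y := by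
  rw [Mm, blockMat_ll _ _ _ _ (show ((EQ (2 * m)) (Sum.inl x)).val < 2 * m by
      simpa using x.isLt)
    (show ((EQ (2 * m)) (Sum.inl y)).val < 2 * m by simpa using y.isLt)]
  try congr 1 <;> exact Fin.ext rfl

lemma Mm_inr_inr (x y : Fin (2 * m)) :
    Mm A B U V (EQ (2 * m) (Sum.inr x)) (EQ (2 * m) (Sum.inr y)) = B x y := by
  rw [Mm, blockMat_rr _ _ _ _ (show ¬ ((EQ (2 * m)) (Sum.inr x)).val < 2 * m by simp)
    (show ¬ ((EQ (2 * m)) (Sum.inr y)).val < 2 * m by simp)]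
  congr 1 <;> (apply Fin.ext; simp)

lemma fT_Psi (S : Finset (Fin (2 * m))) (hS : S.card = m) (α β : Perm (Fin (2 * m))) :
    fT A B U V (Psi S hS α β)
      = (((Equiv.Perm.sign α : ℤ) : ℝ) * ∏ i : Fin m, A (α (pos i 0)) (α (pos i 1)))
        * (((Equiv.Perm.sign β : ℤ) : ℝ) * ∏ i : Fin m, B (β (pos i 0)) (β (pos i 1))) := by
  have hsign : Equiv.Perm.sign (Psi S hS α β) = Equiv.Perm.sign α * Equiv.Perm.sign β := by
    rw [Psi, Equiv.Perm.sign_mul, Equiv.Perm.sign_inv, sign_wS S hS, mul_one, sig0,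
      Equiv.Perm.sign_permCongr, Equiv.Perm.sign_sumCongr]
  have hG : ∀ i : Fin (2 * m), Mm A B U V (Psi S hS α β (pos i 0)) (Psi S hS α β (pos i 1))
      = Mm A B U V (sig0 α β (pos ((rho S hS)⁻¹ i) 0)) (sig0 α β (pos ((rho S hS)⁻¹ i) 1)) := by
    intro i; rw [Psi_apply, Psi_apply]
  have hprod : (∏ i : Fin (2 * m),
        Mm A B U V (Psi S hS α β (pos i 0)) (Psi S hS α β (pos i 1)))
      = (∏ i : Fin m, A (α (pos i 0)) (α (pos i 1)))
        * ∏ i : Fin m, B (β (pos i 0)) (β (pos i 1)) := by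
    rw [Finset.prod_congr rfl (fun i _ => hG i)]
    rw [Equiv.prod_comp ((rho S hS)⁻¹)
      (fun j : Fin (2 * m) => Mm A B U V (sig0 α β (pos j 0)) (sig0 α β (pos j 1)))]
    rw [← Equiv.prod_comp (EQ m)
      (fun j : Fin (2 * m) => Mm A B U V (sig0 α β (pos j 0)) (sig0 α β (pos j 1)))]
    rw [Fintype.prod_sum_type]
    congr 1
    · refine Finset.prod_congr rfl fun a _ => ?_
      have h : ((EQ m) (Sum.inl a)).val < m := by simpa using a.isLt
      rw [sig0_pos_lt α β _ _ h, sig0_pos_lt α β _ _ h, Mm_inl_inl]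
      congr 2 <;> exact congrArg α (by apply Fin.ext; rfl)
    · refine Finset.prod_congr rfl fun a _ => ?_
      have h : ¬ ((EQ m) (Sum.inr a)).val < m := by simp
      rw [sig0_pos_ge α β _ _ h, sig0_pos_ge α β _ _ h, Mm_inr_inr]
      congr 2 <;> exact congrArg (fun z : Fin m => pos z _)
        (Fin.ext (by simp only [EQ_inr]; omega))
  rw [fT, hsign, hprod]
  push_cast
  ring


lemma sum_fiber (S : Finset (Fin (2 * m))) (hS : S.card = m) :
    ∑ σ ∈ (univ.filter (fun σ : Perm (Fin (2 * (2 * m))) => noCross σ)).filter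
        (fun σ => univ.filter (fun i => side (σ (pos i 0))) = S), fT A B U V σ
    = (∑ α : Perm (Fin (2 * m)),
          ((Equiv.Perm.sign α : ℤ) : ℝ) * ∏ i : Fin m, A (α (pos i 0)) (α (pos i 1)))
      * (∑ β : Perm (Fin (2 * m)),
          ((Equiv.Perm.sign β : ℤ) : ℝ) * ∏ i : Fin m, B (β (pos i 0)) (β (pos i 1))) := by
  have hps : ∑ p : Perm (Fin (2 * m)) × Perm (Fin (2 * m)),
      (((Equiv.Perm.sign p.1 : ℤ) : ℝ) * ∏ i : Fin m, A (p.1 (pos i 0)) (p.1 (pos i 1)))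
        * (((Equiv.Perm.sign p.2 : ℤ) : ℝ) * ∏ i : Fin m, B (p.2 (pos i 0)) (p.2 (pos i 1)))
      = (∑ α : Perm (Fin (2 * m)),
          ((Equiv.Perm.sign α : ℤ) : ℝ) * ∏ i : Fin m, A (α (pos i 0)) (α (pos i 1)))
        * (∑ β : Perm (Fin (2 * m)),
          ((Equiv.Perm.sign β : ℤ) : ℝ) * ∏ i : Fin m, B (β (pos i 0)) (β (pos i 1))) := by
    rw [Fintype.sum_prod_type, Finset.sum_mul_sum]
  rw [← hps]
  refine (Finset.sum_bij (fun (p : Perm (Fin (2 * m)) × Perm (Fin (2 * m))) _ =>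
    Psi S hS p.1 p.2) ?_ ?_ ?_ ?_).symm
  · -- membership
    rintro ⟨α, β⟩ -
    simp only [Finset.mem_filter, Finset.mem_univ, true_and]
    constructor
    · intro j
      rw [side_Psi S hS α β j 0, side_Psi S hS α β j 1]
    · ext j
      simp only [Finset.mem_filter, Finset.mem_univ, true_and]
      exact side_Psi S hS α β j 0
  · -- injectivity
    intro p1 h1 p2 h2 hEq
    obtain ⟨α1, β1⟩ := p1
    obtain ⟨α2, β2⟩ := p2
    have h0 : sig0 α1 β1 = sig0 α2 β2 := by
      have := congrArg (fun τ => τ * wS S hS) hEq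
      simpa [Psi, mul_assoc] using this
    have hα : α1 = α2 := by
      apply Equiv.ext; intro a
      have := congrArg (fun τ : Perm (Fin (2*(2*m))) => τ (EQ (2*m) (Sum.inl a))) h0
      simp only [sig0_inl] at this
      exact Sum.inl.inj ((EQ (2*m)).injective this)
    have hβ : β1 = β2 := by
      apply Equiv.ext; intro a
      have := congrArg (fun τ : Perm (Fin (2*(2*m))) => τ (EQ (2*m) (Sum.inr a))) h0
      simp only [sig0_inr] at this
      exact Sum.inr.inj ((EQ (2*m)).injective this)
    rw [Prod.ext_iff]; exact ⟨hα, hβ⟩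
  · -- surjectivity
    intro σ hσ
    rw [Finset.mem_filter, Finset.mem_filter] at hσ
    obtain ⟨⟨-, hnc⟩, hls⟩ := hσ
    have hside0 : ∀ (i : Fin (2 * m)) (b : Fin 2),
        side ((σ * wS S hS) (pos i b)) ↔ i.val < m := by
      intro i b
      have hv : (σ * wS S hS) (pos i b) = σ (pos (rho S hS i) b) := by
        rw [Equiv.Perm.mul_apply, wS_apply]
      rw [hv]
      have hS0 : side (σ (pos (rho S hS i) 0)) ↔ rho S hS i ∈ S := by
        have h4 := Finset.ext_iff.mp hls (rho S hS i)
        simpa using h4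
      have hb : side (σ (pos (rho S hS i) b)) ↔ side (σ (pos (rho S hS i) 0)) := by
        fin_cases b
        · exact Iff.rfl
        · exact (hnc (rho S hS i)).symm
      rw [hb, hS0, rho_mem_iff S hS i]
    have hxl : ∀ x : Fin (2 * m), side ((σ * wS S hS) (EQ (2 * m) (Sum.inl x))) := by
      intro x
      have hx2 : x.val / 2 < 2 * m := by have := x.isLt; omega
      have he : EQ (2 * m) (Sum.inl x)
          = pos (⟨x.val / 2, hx2⟩ : Fin (2 * m)) ⟨x.val % 2, by omega⟩ :=
        Fin.ext (by simp [pos]; omega)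
      rw [he, hside0]
      show x.val / 2 < m
      have := x.isLt; omega
    have hxr : ∀ x : Fin (2 * m), ¬ side ((σ * wS S hS) (EQ (2 * m) (Sum.inr x))) := by
      intro x
      have hx2 : (2 * m + x.val) / 2 < 2 * m := by have := x.isLt; omega
      have he : EQ (2 * m) (Sum.inr x)
          = pos (⟨(2 * m + x.val) / 2, hx2⟩ : Fin (2 * m)) ⟨(2 * m + x.val) % 2, by omega⟩ :=
        Fin.ext (by simp [pos]; omega)
      rw [he, hside0]
      show ¬ (2 * m + x.val) / 2 < m
      omega
    have haInj : Function.Injective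
        (fun x : Fin (2 * m) => (⟨((σ * wS S hS) (EQ (2 * m) (Sum.inl x))).val, hxl x⟩
          : Fin (2 * m))) := by
      intro x y hxy
      have h1 := congrArg Fin.val hxy
      simp only at h1
      exact Sum.inl.inj ((EQ (2 * m)).injective ((σ * wS S hS).injective (Fin.ext h1)))
    have hbInj : Function.Injective
        (fun x : Fin (2 * m) => (⟨((σ * wS S hS) (EQ (2 * m) (Sum.inr x))).val - 2 * m,
          by have := ((σ * wS S hS) (EQ (2 * m) (Sum.inr x))).isLt; omega⟩
          : Fin (2 * m))) := by
      intro x y hxy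
      have h1 := congrArg Fin.val hxy
      simp only at h1
      have h2 := hxr x
      have h3 := hxr y
      unfold side at h2 h3
      have : ((σ * wS S hS) (EQ (2 * m) (Sum.inr x))).val
          = ((σ * wS S hS) (EQ (2 * m) (Sum.inr y))).val := by omega
      exact Sum.inr.inj ((EQ (2 * m)).injective ((σ * wS S hS).injective (Fin.ext this)))
    refine ⟨(Equiv.ofBijective _ (Finite.injective_iff_bijective.mp haInj),
      Equiv.ofBijective _ (Finite.injective_iff_bijective.mp hbInj)), Finset.mem_univ _, ?_⟩
    have hs0 : sig0 (Equiv.ofBijective _ (Finite.injective_iff_bijective.mp haInj))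
        (Equiv.ofBijective _ (Finite.injective_iff_bijective.mp hbInj)) = σ * wS S hS := by
      apply Equiv.ext
      intro z
      obtain ⟨w, rfl⟩ := (EQ (2 * m)).surjective z
      cases w with
      | inl x =>
        rw [sig0_inl]
        exact Fin.ext rfl
      | inr x =>
        rw [sig0_inr]
        apply Fin.ext
        have h2 := hxr x
        unfold side at h2
        simp only [EQ_inr, Equiv.ofBijective_apply]
        omega
    show sig0 _ _ * (wS S hS)⁻¹ = σ
    rw [hs0, mul_inv_cancel_right]
  · -- values
    rintro ⟨α, β⟩ -
    exact (fT_Psi A B U V S hS α β).symm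

lemma sum_nocross :
    ∑ σ ∈ univ.filter (fun σ : Perm (Fin (2 * (2 * m))) => noCross σ), fT A B U V σ
    = ((2 * m).choose m : ℝ)
      * ((∑ α : Perm (Fin (2 * m)),
            ((Equiv.Perm.sign α : ℤ) : ℝ) * ∏ i : Fin m, A (α (pos i 0)) (α (pos i 1)))
        * (∑ β : Perm (Fin (2 * m)),
            ((Equiv.Perm.sign β : ℤ) : ℝ) * ∏ i : Fin m, B (β (pos i 0)) (β (pos i 1)))) := by
  rw [← Finset.sum_fiberwise_of_maps_to
    (g := fun σ : Perm (Fin (2 * (2 * m))) => univ.filter (fun i => side (σ (pos i 0))))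
    (t := univ.filter (fun S : Finset (Fin (2 * m)) => S.card = m))
    (fun σ hσ => by
      simp only [Finset.mem_filter, Finset.mem_univ, true_and]
      exact card_left_slots σ (by simpa using (Finset.mem_filter.mp hσ).2))
    (fT A B U V)]
  rw [Finset.sum_congr rfl (fun S hs => sum_fiber A B U V S
    (by simpa using (Finset.mem_filter.mp hs).2))]
  rw [Finset.sum_const]
  have hcard : (univ.filter (fun S : Finset (Fin (2 * m)) => S.card = m)).card
      = (2 * m).choose m := by
    rw [← Finset.powerset_univ, ← Finset.powersetCard_eq_filter, Finset.card_powersetCard,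
      Finset.card_univ, Fintype.card_fin]
  rw [hcard, nsmul_eq_mul]


lemma total_sum :
    ∑ σ : Perm (Fin (2 * (2 * m))), fT A B U V σ
    = ((2 * m).choose m : ℝ)
      * ((∑ α : Perm (Fin (2 * m)),
            ((Equiv.Perm.sign α : ℤ) : ℝ) * ∏ i : Fin m, A (α (pos i 0)) (α (pos i 1)))
        * (∑ β : Perm (Fin (2 * m)),
            ((Equiv.Perm.sign β : ℤ) : ℝ) * ∏ i : Fin m, B (β (pos i 0)) (β (pos i 1)))) := by
  rw [← Finset.sum_filter_add_sum_filter_not univ (fun σ => noCross σ) (fT A B U V),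
    sum_nocross A B U V, sum_cross_zero A B U V, add_zero]

end Main

end PfAux

/-- **Pfaffian of a block matrix with rank-one off-diagonal block (even case)**: for
skew-symmetric `k × k` matrices `A`, `B` with `k = 2m` even, vectors `U`, `V` and
`D = U Vᵀ`, one has `pf [[A, D], [-Dᵀ, B]] = pf A * pf B`. -/
theorem pfaffian_block_rank_one_even (m : ℕ)
    (A B : Matrix (Fin (2 * m)) (Fin (2 * m)) ℝ)
    (hA : Aᵀ = -A) (hB : Bᵀ = -B) (U V : Fin (2 * m) → ℝ) :
    pf (blockMat A (Matrix.of fun i j => U i * V j)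
        (-(Matrix.of fun i j => U i * V j)ᵀ) B) = pf A * pf B := by
  have hM : blockMat A (Matrix.of fun i j => U i * V j)
      (-(Matrix.of fun i j => U i * V j)ᵀ) B = PfAux.Mm A B U V := rfl
  rw [hM, PfAux.pf_even (2 * m) (PfAux.Mm A B U V), PfAux.pf_even m A, PfAux.pf_even m B]
  have h0 : ∀ σ : Perm (Fin (2 * (2 * m))),
      ((Equiv.Perm.sign σ : ℤ) : ℝ) * ∏ i : Fin (2 * m),
        PfAux.Mm A B U V (σ (PfAux.pos i 0)) (σ (PfAux.pos i 1)) = PfAux.fT A B U V σ :=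
    fun _ => rfl
  rw [Finset.sum_congr rfl (fun σ _ => h0 σ), PfAux.total_sum A B U V]
  set SA := ∑ α : Perm (Fin (2 * m)),
    ((Equiv.Perm.sign α : ℤ) : ℝ) * ∏ i : Fin m, A (α (PfAux.pos i 0)) (α (PfAux.pos i 1)) with hSA
  set SB := ∑ β : Perm (Fin (2 * m)),
    ((Equiv.Perm.sign β : ℤ) : ℝ) * ∏ i : Fin m, B (β (PfAux.pos i 0)) (β (PfAux.pos i 1)) with hSB
  have hfac : ((2 * m).choose m : ℝ) * ((m.factorial : ℝ) * (m.factorial : ℝ))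
      = ((2 * m).factorial : ℝ) := by
    have hc := Nat.choose_mul_factorial_mul_factorial (show m ≤ 2 * m by omega)
    have h2 : 2 * m - m = m := by omega
    rw [h2] at hc
    rw [← mul_assoc]
    exact_mod_cast hc
  have h2m : (2 : ℝ) ^ (2 * m) = 2 ^ m * 2 ^ m := by rw [two_mul, pow_add]
  have hne1 : ((2 * m).factorial : ℝ) ≠ 0 := Nat.cast_ne_zero.mpr (Nat.factorial_ne_zero _)
  have hne2 : ((m).factorial : ℝ) ≠ 0 := Nat.cast_ne_zero.mpr (Nat.factorial_ne_zero _)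
  have hne3 : (2 : ℝ) ^ m ≠ 0 := pow_ne_zero _ two_ne_zero
  have hne4 : (2 : ℝ) ^ (2 * m) ≠ 0 := pow_ne_zero _ two_ne_zero
  field_simp
  rw [h2m]
  linear_combination (SA * SB * ((2:ℝ) ^ m * (2:ℝ) ^ m)) * hfac
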